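/- Let φ:(0,∞)→[0,∞) be a bounded decreasing function with ‖φ‖₁ = ∫₀^∞ φ(t) dt < ∞. Then there exists a bounded decreasing convex C¹ function m:[0,∞)→[0,∞) with m(0) ≤ 4·‖φ‖₁ such that −m'(t) ≥ φ(t) for all t > 0, −m'(0+) ≤ 4·φ(0+), and the function B(x,y) := x²·m(y) is convex on ℝ×(0,∞); moreover −m' is convex. -/

import Mathlib

open MeasureTheory Set

noncomputable section

-- pointwise lemmas about c^2/(c+y)
lemma pt_nonneg (c y : ℝ) (hc : 0 ≤ c) (hy : 0 ≤ y) : 0 ≤ c^2/(c+y) := by positivity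

lemma pt_le (c y : ℝ) (hc : 0 ≤ c) (hy : 0 ≤ y) : c^2/(c+y) ≤ c := by
  rcases eq_or_lt_of_le hc with h | h
  · simp [← h]
  · rw [div_le_iff₀ (by linarith)]; nlinarith

lemma pt_eq (c : ℝ) (hc : 0 ≤ c) : c^2/(c+0) = c := by
  rcases eq_or_lt_of_le hc with h | h
  · simp [← h]
  · rw [add_zero, sq, mul_div_assoc, div_self h.ne', mul_one]

lemma pt_anti (c y z : ℝ) (hc : 0 ≤ c) (hy : 0 ≤ y) (hyz : y ≤ z) :
    c^2/(c+z) ≤ c^2/(c+y) := by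
  rcases eq_or_lt_of_le hc with h | h
  · simp [← h]
  · exact div_le_div_of_nonneg_left (by positivity) (by linarith) (by linarith)

lemma pt_cvx (c x y a b : ℝ) (hc : 0 ≤ c) (hx : 0 ≤ x) (hy : 0 ≤ y)
    (ha : 0 ≤ a) (hb : 0 ≤ b) (hab : a + b = 1) :
    c^2/(c+(a*x+b*y)) ≤ a * (c^2/(c+x)) + b * (c^2/(c+y)) := by
  rcases eq_or_lt_of_le hc with h | h
  · simp [← h]
  · have hU : 0 < c + x := by linarith
    have hV : 0 < c + y := by linarith
    have hW : 0 < c + (a*x+b*y) := by nlinarith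
    rw [div_le_iff₀ hW]
    have e1 : a * (c^2/(c+x)) + b * (c^2/(c+y))
        = (a * (c+y) + b * (c+x)) * c^2 / ((c+x)*(c+y)) := by
      field_simp
    rw [e1, div_mul_eq_mul_div, le_div_iff₀ (by positivity)]
    have hb' : b = 1 - a := by linarith
    have h1 : (c+x)*(c+y) ≤ (a*(c+y)+b*(c+x))*(c+(a*x+b*y)) := by
      have hid : (a*(c+y)+b*(c+x))*(c+(a*x+b*y)) - (c+x)*(c+y) = a*b*(x-y)^2 := by
        rw [hb']; ring
      nlinarith [mul_nonneg (mul_nonneg ha hb) (sq_nonneg (x-y)), hid]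
    nlinarith [mul_le_mul_of_nonneg_left h1 (sq_nonneg c)]

lemma pt2_nonneg (c y : ℝ) : 0 ≤ c^2/(c+y)^2 := by positivity

lemma pt2_le (c y : ℝ) (hc : 0 ≤ c) (hy : 0 < y) : c^2/(c+y)^2 ≤ c/y := by
  rcases eq_or_lt_of_le hc with h | h
  · simp [← h]
  · rw [div_le_div_iff₀ (by positivity) hy]
    nlinarith [mul_nonneg h.le (sq_nonneg y), mul_nonneg (mul_nonneg h.le h.le) hy.le,
      mul_pos (mul_pos h h) h]

lemma pt2_le_one (c y : ℝ) (hc : 0 ≤ c) (hy : 0 < y) : c^2/(c+y)^2 ≤ 1 := by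
  rw [div_le_one (by positivity)]; nlinarith

lemma pt2_ge (c t : ℝ) (ht : 0 < t) (hct : t ≤ c) : (1:ℝ)/4 ≤ c^2/(c+t)^2 := by
  rw [div_le_div_iff₀ (by norm_num) (by nlinarith : (0:ℝ) < (c+t)^2)]; nlinarith

lemma pt2_cvx (c x y a b : ℝ) (hc : 0 ≤ c) (hx : 0 < x) (hy : 0 < y)
    (ha : 0 ≤ a) (hb : 0 ≤ b) (hab : a + b = 1) :
    c^2/(c+(a*x+b*y))^2 ≤ a * (c^2/(c+x)^2) + b * (c^2/(c+y)^2) := by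
  rcases eq_or_lt_of_le hc with h | h
  · simp [← h]
  · have hU : 0 < c + x := by linarith
    have hV : 0 < c + y := by linarith
    have hW : 0 < c + (a*x+b*y) := by nlinarith
    have key : (1:ℝ)/(c+(a*x+b*y))^2 ≤ a/(c+x)^2 + b/(c+y)^2 := by
      set U := c + x
      set V := c + y
      have hWeq : c + (a*x+b*y) = a*U + b*V := by simp only [U, V]; nlinarith [hab]
      have hWpos : 0 < a*U + b*V := hWeq ▸ hW
      rw [hWeq, div_add_div _ _ (by positivity : (U^2:ℝ) ≠ 0) (by positivity : (V^2:ℝ) ≠ 0),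
        div_le_div_iff₀ (by positivity) (by positivity)]
      have hb' : b = 1 - a := by linarith
      have h1 : U*V ≤ (a*V+b*U)*(a*U+b*V) := by
        have hid : (a*V+b*U)*(a*U+b*V) - U*V = a*b*(U-V)^2 := by rw [hb']; ring
        nlinarith [mul_nonneg (mul_nonneg ha hb) (sq_nonneg (U-V)), hid]
      have h2 : (a*V+b*U)^2 ≤ a*V^2+b*U^2 := by
        have hid : a*V^2+b*U^2 - (a*V+b*U)^2 = a*b*(U-V)^2 := by rw [hb']; ring
        nlinarith [mul_nonneg (mul_nonneg ha hb) (sq_nonneg (U-V)), hid]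
      have h3 : (U*V)^2 ≤ ((a*V+b*U)*(a*U+b*V))^2 :=
        pow_le_pow_left₀ (mul_pos hU hV).le h1 2
      have h4 := mul_le_mul_of_nonneg_right h2 (sq_nonneg (a*U+b*V))
      have h5 : ((a*V+b*U)*(a*U+b*V))^2 = (a*V+b*U)^2*(a*U+b*V)^2 := mul_pow _ _ 2
      nlinarith [h3, h4, h5]
    calc c^2/(c+(a*x+b*y))^2 = c^2 * (1/(c+(a*x+b*y))^2) := by ring
    _ ≤ c^2 * (a/(c+x)^2 + b/(c+y)^2) := by
        exact mul_le_mul_of_nonneg_left key (by positivity)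
    _ = a * (c^2/(c+x)^2) + b * (c^2/(c+y)^2) := by ring

lemma ptB_cvx (c x₁ x₂ y₁ y₂ a b : ℝ) (hc : 0 ≤ c) (hy₁ : 0 < y₁) (hy₂ : 0 < y₂)
    (ha : 0 ≤ a) (hb : 0 ≤ b) (hab : a + b = 1) :
    (a*x₁+b*x₂)^2 * (c^2/(c+(a*y₁+b*y₂))) ≤
      a * (x₁^2 * (c^2/(c+y₁))) + b * (x₂^2 * (c^2/(c+y₂))) := by
  rcases eq_or_lt_of_le hc with h | h
  · simp [← h]
  · have hU : 0 < c + y₁ := by linarith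
    have hV : 0 < c + y₂ := by linarith
    have hW : 0 < c + (a*y₁+b*y₂) := by nlinarith
    have key : (a*x₁+b*x₂)^2/(c+(a*y₁+b*y₂)) ≤ a*(x₁^2/(c+y₁)) + b*(x₂^2/(c+y₂)) := by
      set U := c + y₁
      set V := c + y₂
      have hWeq : c + (a*y₁+b*y₂) = a*U + b*V := by simp only [U, V]; nlinarith [hab]
      rw [hWeq, div_le_iff₀ (by nlinarith)]
      have e1 : a*(x₁^2/U) + b*(x₂^2/V) = (a*x₁^2*V + b*x₂^2*U)/(U*V) := by
        field_simp
      rw [e1, div_mul_eq_mul_div, le_div_iff₀ (by positivity)]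
      nlinarith [mul_nonneg (mul_nonneg ha hb) (sq_nonneg (x₁*V - x₂*U))]
    calc (a*x₁+b*x₂)^2 * (c^2/(c+(a*y₁+b*y₂)))
        = c^2 * ((a*x₁+b*x₂)^2/(c+(a*y₁+b*y₂))) := by ring
    _ ≤ c^2 * (a*(x₁^2/(c+y₁)) + b*(x₂^2/(c+y₂))) := mul_le_mul_of_nonneg_left key (by positivity)
    _ = a * (x₁^2 * (c^2/(c+y₁))) + b * (x₂^2 * (c^2/(c+y₂))) := by ring

lemma pt_hasDeriv (c x : ℝ) (hc : 0 ≤ c) (hx : 0 < x) :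
    HasDerivAt (fun u => c^2/(c+u)) (-(c^2/(c+x)^2)) x := by
  rcases eq_or_lt_of_le hc with h | h
  · have : (fun u : ℝ => c^2/(c+u)) = fun _ => (0:ℝ) := by
      funext u; rw [← h]; simp
    rw [this, ← h]
    simpa using hasDerivAt_const x (0:ℝ)
  · have hcx : c + x ≠ 0 := by positivity
    have h1 : HasDerivAt (fun u : ℝ => c + u) 1 x := by
      simpa using (hasDerivAt_id x).const_add c
    have := (hasDerivAt_const x (c^2)).div h1 hcx
    have e : (-(c^2/(c+x)^2)) = (0 * (c + x) - c ^ 2 * 1) / (c + x) ^ 2 := by ring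
    rw [e]; exact this

lemma pt_contAt (c x : ℝ) (hc : 0 ≤ c) (hcx : 0 < c + x) :
    ContinuousAt (fun u => c^2/(c+u)) x := by
  exact (continuousAt_const.div (continuousAt_const.add continuousAt_id) hcx.ne')

lemma pt2_contAt (c x : ℝ) (hc : 0 ≤ c) (hx : 0 < x) :
    ContinuousAt (fun u => c^2/(c+u)^2) x := by
  rcases eq_or_lt_of_le hc with h | h
  · have : (fun u : ℝ => c^2/(c+u)^2) = fun _ => (0:ℝ) := by
      funext u; rw [← h]; simp
    rw [this]; exact continuousAt_const
  · exact continuousAt_const.div (((continuousAt_const.add continuousAt_id)).pow 2)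
      (by positivity)

lemma pt_contWithinAt (c x : ℝ) (hc : 0 ≤ c) (hx : 0 ≤ x) :
    ContinuousWithinAt (fun u => c^2/(c+u)) (Ici 0) x := by
  rcases eq_or_lt_of_le hc with h | h
  · have : (fun u : ℝ => c^2/(c+u)) = fun _ => (0:ℝ) := by
      funext u; rw [← h]; simp
    rw [this]; exact continuousWithinAt_const
  · exact (pt_contAt c x hc (by linarith)).continuousWithinAt


/-- Construction of the Bellman function ingredient: given a bounded decreasing
`φ : (0,∞) → [0,∞)` with `∫₀^∞ φ < ∞`, there is a bounded decreasing convex C¹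
function `m : [0,∞) → [0,∞)` with `m(0) ≤ 4‖φ‖₁`, `−m'(t) ≥ φ(t)` for `t > 0`,
`−m'(0+) ≤ 4 φ(0+)`, such that `B(x,y) = x² m(y)` is convex; moreover `−m'` is convex. -/
theorem bellman_majorant_exists
    (φ : ℝ → ℝ)
    (hφ_nonneg : ∀ t, 0 < t → 0 ≤ φ t)
    (hφ_dec : AntitoneOn φ (Ioi 0))
    (hφ_bdd : BddAbove (φ '' Ioi 0))
    (hφ_int : IntegrableOn φ (Ioi 0)) :
    ∃ m : ℝ → ℝ,
      -- m : [0,∞) → [0,∞), bounded, decreasing, convex, C¹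
      (∀ y, 0 ≤ y → 0 ≤ m y) ∧
      AntitoneOn m (Ici 0) ∧
      ConvexOn ℝ (Ici 0) m ∧
      ContinuousOn m (Ici 0) ∧
      DifferentiableOn ℝ m (Ioi 0) ∧
      ContinuousOn (deriv m) (Ioi 0) ∧
      -- m(0) ≤ 4 ‖φ‖₁
      m 0 ≤ 4 * ∫ t in Ioi (0 : ℝ), φ t ∧
      -- −m'(t) ≥ φ(t) for t > 0
      (∀ t, 0 < t → φ t ≤ -(deriv m t)) ∧
      -- −m'(0+) ≤ 4 φ(0+)  (φ(0+) = sup of φ on (0,∞) since φ is decreasing)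
      (∀ t, 0 < t → -(deriv m t) ≤ 4 * sSup (φ '' Ioi 0)) ∧
      -- B(x,y) = x² m(y) is convex on ℝ × (0,∞)
      ConvexOn ℝ ((univ : Set ℝ) ×ˢ Ioi (0 : ℝ))
        (fun p : ℝ × ℝ => p.1 ^ 2 * m p.2) ∧
      -- −m' is convex
      ConvexOn ℝ (Ioi 0) (fun t => -(deriv m t)) := by
  classical
  -- the distribution function of φ (w.r.t. Lebesgue measure restricted to (0,∞))
  set ν : ℝ → ENNReal := fun r => (volume.restrict (Ioi 0)) {a | r < φ a} with hνdef
  have hν_anti : Antitone ν := fun r s hrs =>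
    measure_mono (fun a ha => lt_of_le_of_lt hrs ha)
  have hν_meas : Measurable ν := hν_anti.measurable
  set ℓ : ℝ → ℝ := fun r => (ν r).toReal with hℓdef
  have hℓ_meas : Measurable ℓ := hν_meas.ennreal_toReal
  have hℓ_nonneg : ∀ r, 0 ≤ ℓ r := fun r => ENNReal.toReal_nonneg
  have hν_fin : ∀ r, 0 < r → ν r < ⊤ := fun r hr => hφ_int.measure_gt_lt_top hr
  have hφ_ae_nonneg : 0 ≤ᵐ[volume.restrict (Ioi 0)] φ :=
    (ae_restrict_iff' measurableSet_Ioi).2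
      (Filter.Eventually.of_forall (fun t ht => hφ_nonneg t ht))
  -- layer cake
  have hIℓ : ∫ t in Ioi (0:ℝ), φ t = ∫ r in Ioi (0:ℝ), ℓ r :=
    hφ_int.integral_eq_integral_meas_lt hφ_ae_nonneg
  -- ℓ is integrable on (0,∞)
  have hℓ_int : Integrable ℓ (volume.restrict (Ioi 0)) := by
    refine ⟨hℓ_meas.aestronglyMeasurable, ?_⟩
    rw [hasFiniteIntegral_iff_ofReal
      (Filter.Eventually.of_forall (fun r => hℓ_nonneg r))]
    calc ∫⁻ r in Ioi (0:ℝ), ENNReal.ofReal (ℓ r)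
        ≤ ∫⁻ r in Ioi (0:ℝ), ν r := lintegral_mono fun r => ENNReal.ofReal_toReal_le
      _ = ∫⁻ a, ENNReal.ofReal (φ a) ∂(volume.restrict (Ioi 0)) :=
          (lintegral_eq_lintegral_meas_lt _ hφ_ae_nonneg hφ_int.aemeasurable).symm
      _ < ⊤ := hφ_int.lintegral_lt_top
  -- ℓ r ≥ t whenever r < φ t
  have hℓ_ge : ∀ t, 0 < t → ∀ r, 0 < r → r < φ t → t ≤ ℓ r := by
    intro t ht r hr hrφ
    have hsub : Ioc (0:ℝ) t ⊆ {a | r < φ a} := fun a ha =>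
      lt_of_lt_of_le hrφ (hφ_dec ha.1 ht ha.2)
    have h1 : ENNReal.ofReal t ≤ ν r := by
      have h2 : (volume.restrict (Ioi 0)) (Ioc 0 t) ≤ ν r := measure_mono hsub
      rwa [Measure.restrict_apply measurableSet_Ioc,
        inter_eq_left.mpr Ioc_subset_Ioi_self, Real.volume_Ioc, sub_zero] at h2
    have h3 := ENNReal.toReal_mono (hν_fin r hr).ne h1
    rwa [ENNReal.toReal_ofReal ht.le] at h3
  set S : ℝ := sSup (φ '' Ioi 0) with hSdef
  have hφ_le_S : ∀ a, 0 < a → φ a ≤ S := fun a ha => le_csSup hφ_bdd ⟨a, ha, rfl⟩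
  have hS0 : 0 ≤ S := le_trans (hφ_nonneg 1 one_pos) (hφ_le_S 1 one_pos)
  have hℓ_zero : ∀ r, S ≤ r → ℓ r = 0 := by
    intro r hSr
    have h0 : ν r = 0 := by
      rw [hνdef]
      simp only
      rw [Measure.restrict_apply' measurableSet_Ioi]
      have hset : {a : ℝ | r < φ a} ∩ Ioi 0 = ∅ := by
        ext a
        simp only [mem_inter_iff, mem_setOf_eq, mem_Ioi, mem_empty_iff_false, iff_false]
        rintro ⟨h1, h2⟩
        exact absurd h1 (not_lt.2 (le_trans (hφ_le_S a h2) hSr))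
      rw [hset, measure_empty]
    simp [hℓdef, h0]
  -- measurability and integrability of the integrands
  have hq_meas : ∀ y : ℝ, AEStronglyMeasurable (fun r => ℓ r^2/(ℓ r + y))
      (volume.restrict (Ioi 0)) := fun y =>
    ((hℓ_meas.pow_const 2).div (hℓ_meas.add_const y)).aestronglyMeasurable
  have hq2_meas : ∀ y : ℝ, AEStronglyMeasurable (fun r => ℓ r^2/(ℓ r + y)^2)
      (volume.restrict (Ioi 0)) := fun y =>
    ((hℓ_meas.pow_const 2).div ((hℓ_meas.add_const y).pow_const 2)).aestronglyMeasurable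
  have hq_int : ∀ y : ℝ, 0 ≤ y → Integrable (fun r => ℓ r^2/(ℓ r + y))
      (volume.restrict (Ioi 0)) := by
    intro y hy
    refine hℓ_int.mono (hq_meas y) (Filter.Eventually.of_forall fun r => ?_)
    rw [Real.norm_eq_abs, Real.norm_eq_abs,
      abs_of_nonneg (pt_nonneg _ _ (hℓ_nonneg r) hy), abs_of_nonneg (hℓ_nonneg r)]
    exact pt_le _ _ (hℓ_nonneg r) hy
  have hq2_int : ∀ y : ℝ, 0 < y → Integrable (fun r => ℓ r^2/(ℓ r + y)^2)
      (volume.restrict (Ioi 0)) := by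
    intro y hy
    refine (hℓ_int.const_mul (1/y)).mono (hq2_meas y)
      (Filter.Eventually.of_forall fun r => ?_)
    rw [Real.norm_eq_abs, Real.norm_eq_abs, abs_of_nonneg (pt2_nonneg _ _),
      abs_of_nonneg (by positivity : (0:ℝ) ≤ 1/y * ℓ r)]
    calc ℓ r^2/(ℓ r + y)^2 ≤ ℓ r / y := pt2_le _ _ (hℓ_nonneg r) hy
      _ = 1/y * ℓ r := by ring
  -- the function m and its (minus) derivative g
  set m : ℝ → ℝ := fun y => 4 * ∫ r in Ioi (0:ℝ), ℓ r^2/(ℓ r + y) with hmdef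
  set g : ℝ → ℝ := fun y => 4 * ∫ r in Ioi (0:ℝ), ℓ r^2/(ℓ r + y)^2 with hgdef
  have hg_nonneg : ∀ y, 0 ≤ g y := fun y =>
    mul_nonneg (by norm_num) (integral_nonneg fun r => pt2_nonneg _ _)
  have hball : ∀ y : ℝ, 0 < y → ∀ x ∈ Metric.ball y (y/2), y/2 < x := by
    intro y hy x hx
    rw [Metric.mem_ball, Real.dist_eq, abs_lt] at hx
    linarith [hx.1]
  -- derivative of m
  have hm_deriv : ∀ y, 0 < y → HasDerivAt m (-(g y)) y := by
    intro y hy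
    have key := hasDerivAt_integral_of_dominated_loc_of_deriv_le
      (F := fun x r => ℓ r^2/(ℓ r + x)) (F' := fun x r => -(ℓ r^2/(ℓ r + x)^2))
      (x₀ := y) (bound := fun r => 2/y * ℓ r) (s := Metric.ball y (y/2)) (Metric.ball_mem_nhds y (by positivity))
      (Filter.Eventually.of_forall (fun x => hq_meas x)) (hq_int y hy.le)
      ((hq2_meas y).neg)
      (Filter.Eventually.of_forall (fun r => ?_)) ((hℓ_int.const_mul (2/y)))
      (Filter.Eventually.of_forall (fun r => ?_))
    · have h2 : HasDerivAt m (4 * ∫ r in Ioi (0:ℝ), -(ℓ r^2/(ℓ r + y)^2)) y :=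
        key.2.const_mul 4
      convert h2 using 1
      rw [integral_neg]
      simp only [hgdef]
      ring
    · -- bound
      intro x hx
      have hx' : y/2 < x := hball y hy x hx
      rw [norm_neg, Real.norm_eq_abs, abs_of_nonneg (pt2_nonneg _ _)]
      calc ℓ r^2/(ℓ r + x)^2 ≤ ℓ r / x := pt2_le _ _ (hℓ_nonneg r) (by linarith)
        _ ≤ 2/y * ℓ r := by
            rw [div_le_iff₀ (by linarith)]
            have h3 : (1:ℝ) ≤ 2/y * x := by
              rw [div_mul_eq_mul_div, le_div_iff₀ hy]; linarith
            nlinarith [hℓ_nonneg r]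
    · -- differentiability
      intro x hx
      exact pt_hasDeriv (ℓ r) x (hℓ_nonneg r) (by linarith [hball y hy x hx])
  have hderiv_eq : ∀ t, 0 < t → deriv m t = -(g t) := fun t ht => (hm_deriv t ht).deriv
  -- convexity of m on [0,∞)
  have hm_cvx : ConvexOn ℝ (Ici 0) m := by
    refine ⟨convex_Ici 0, fun y hy z hz a b ha hb hab => ?_⟩
    simp only [smul_eq_mul]
    have hmem : 0 ≤ a*y + b*z := by
      have := convex_Ici (0:ℝ) hy hz ha hb hab
      simpa [smul_eq_mul] using this
    have step : ∫ r in Ioi (0:ℝ), ℓ r^2/(ℓ r + (a*y+b*z))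
        ≤ ∫ r in Ioi (0:ℝ), (a * (ℓ r^2/(ℓ r + y)) + b * (ℓ r^2/(ℓ r + z))) := by
      refine integral_mono (hq_int _ hmem)
        (((hq_int y hy).const_mul a).add ((hq_int z hz).const_mul b)) (fun r => ?_)
      exact pt_cvx (ℓ r) y z a b (hℓ_nonneg r) hy hz ha hb hab
    rw [integral_add ((hq_int y hy).const_mul a) ((hq_int z hz).const_mul b),
      integral_const_mul, integral_const_mul] at step
    simp only [hmdef]
    nlinarith [step]
  -- antitone
  have hm_anti : AntitoneOn m (Ici 0) := by
    intro y hy z hz hyz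
    have step : ∫ r in Ioi (0:ℝ), ℓ r^2/(ℓ r + z) ≤ ∫ r in Ioi (0:ℝ), ℓ r^2/(ℓ r + y) :=
      integral_mono (hq_int z (le_trans hy hyz)) (hq_int y hy)
        (fun r => pt_anti (ℓ r) y z (hℓ_nonneg r) hy hyz)
    simp only [hmdef]
    linarith
  -- nonneg
  have hm_nonneg : ∀ y, 0 ≤ y → 0 ≤ m y := fun y hy =>
    mul_nonneg (by norm_num) (integral_nonneg fun r => pt_nonneg _ _ (hℓ_nonneg r) hy)
  -- continuity of m on [0,∞)
  have hm_cont : ContinuousOn m (Ici 0) := by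
    intro y₀ hy₀
    have base : ContinuousWithinAt (fun x => ∫ r in Ioi (0:ℝ), ℓ r^2/(ℓ r + x)) (Ici 0) y₀ := by
      refine continuousWithinAt_of_dominated
        (Filter.Eventually.of_forall (fun x => hq_meas x)) ?_ hℓ_int
        (Filter.Eventually.of_forall (fun r => ?_))
      · filter_upwards [eventually_mem_nhdsWithin] with x hx
        refine Filter.Eventually.of_forall (fun r => ?_)
        rw [Real.norm_eq_abs, abs_of_nonneg (pt_nonneg _ _ (hℓ_nonneg r) hx)]
        exact pt_le _ _ (hℓ_nonneg r) hx
      · exact pt_contWithinAt (ℓ r) y₀ (hℓ_nonneg r) hy₀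
    exact (base.const_mul 4 : ContinuousWithinAt _ _ _)
  -- continuity of g on (0,∞)
  have hg_cont : ContinuousOn g (Ioi 0) := by
    intro y₀ hy₀
    have hy₀' : (0:ℝ) < y₀ := hy₀
    apply ContinuousAt.continuousWithinAt
    have base : ContinuousAt (fun x => ∫ r in Ioi (0:ℝ), ℓ r^2/(ℓ r + x)^2) y₀ := by
      refine continuousAt_of_dominated
        (Filter.Eventually.of_forall (fun x => hq2_meas x)) ?_
        (hℓ_int.const_mul (2/y₀)) (Filter.Eventually.of_forall (fun r => ?_))
      · filter_upwards [Metric.ball_mem_nhds y₀ (by positivity : (0:ℝ) < y₀/2)] with x hx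
        refine Filter.Eventually.of_forall (fun r => ?_)
        have hx' : y₀/2 < x := hball y₀ hy₀' x hx
        rw [Real.norm_eq_abs, abs_of_nonneg (pt2_nonneg _ _)]
        calc ℓ r^2/(ℓ r + x)^2 ≤ ℓ r / x := pt2_le _ _ (hℓ_nonneg r) (by linarith)
          _ ≤ 2/y₀ * ℓ r := by
              rw [div_le_iff₀ (by linarith)]
              have h3 : (1:ℝ) ≤ 2/y₀ * x := by
                rw [div_mul_eq_mul_div, le_div_iff₀ hy₀']; linarith
              nlinarith [hℓ_nonneg r]
      · exact pt2_contAt (ℓ r) y₀ (hℓ_nonneg r) hy₀'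
    exact base.const_mul 4
  -- convexity of g on (0,∞)
  have hg_cvx : ConvexOn ℝ (Ioi 0) g := by
    refine ⟨convex_Ioi 0, fun y hy z hz a b ha hb hab => ?_⟩
    simp only [smul_eq_mul]
    have hmem : (0:ℝ) < a*y + b*z := by
      have := convex_Ioi (0:ℝ) hy hz ha hb hab
      simpa [smul_eq_mul] using this
    have step : ∫ r in Ioi (0:ℝ), ℓ r^2/(ℓ r + (a*y+b*z))^2
        ≤ ∫ r in Ioi (0:ℝ), (a * (ℓ r^2/(ℓ r + y)^2) + b * (ℓ r^2/(ℓ r + z)^2)) := by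
      refine integral_mono (hq2_int _ hmem)
        (((hq2_int y hy).const_mul a).add ((hq2_int z hz).const_mul b)) (fun r => ?_)
      exact pt2_cvx (ℓ r) y z a b (hℓ_nonneg r) hy hz ha hb hab
    rw [integral_add ((hq2_int y hy).const_mul a) ((hq2_int z hz).const_mul b),
      integral_const_mul, integral_const_mul] at step
    simp only [hgdef]
    nlinarith [step]
  refine ⟨m, hm_nonneg, hm_anti, hm_cvx, hm_cont,
    (fun y hy => ((hm_deriv y hy).differentiableAt).differentiableWithinAt),
    ?_, ?_, ?_, ?_, ?_, ?_⟩
  · -- continuity of deriv m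
    refine (hg_cont.neg).congr (fun t ht => ?_)
    exact hderiv_eq t ht
  · -- m 0 ≤ 4 ∫ φ
    have h1 : m 0 = 4 * ∫ r in Ioi (0:ℝ), ℓ r := by
      simp only [hmdef]
      congr 1
      exact integral_congr_ae (Filter.Eventually.of_forall
        (fun r => pt_eq (ℓ r) (hℓ_nonneg r)))
    rw [h1, hIℓ]
  · -- φ t ≤ -(deriv m t)
    intro t ht
    rw [hderiv_eq t ht, neg_neg]
    rcases le_or_gt (φ t) 0 with h | h
    · exact le_trans h (hg_nonneg t)
    · have h1 : ∫ r in Ioo (0:ℝ) (φ t), ℓ r^2/(ℓ r + t)^2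
          ≤ ∫ r in Ioi (0:ℝ), ℓ r^2/(ℓ r + t)^2 := by
        apply setIntegral_mono_set (hq2_int t ht)
          (Filter.Eventually.of_forall (fun r => pt2_nonneg _ _))
        exact HasSubset.Subset.eventuallyLE Ioo_subset_Ioi_self
      have h2 : ∫ r in Ioo (0:ℝ) (φ t), (1/4 : ℝ)
          ≤ ∫ r in Ioo (0:ℝ) (φ t), ℓ r^2/(ℓ r + t)^2 := by
        refine setIntegral_mono_on
          (integrableOn_const (by simp [Real.volume_Ioo]))
          ((show IntegrableOn (fun r => ℓ r^2/(ℓ r + t)^2) (Ioi 0) volume from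
            hq2_int t ht).mono_set Ioo_subset_Ioi_self) measurableSet_Ioo (fun r hr => ?_)
        exact pt2_ge (ℓ r) t ht (hℓ_ge t ht r hr.1 hr.2)
      have h3 : ∫ r in Ioo (0:ℝ) (φ t), (1/4 : ℝ) = φ t / 4 := by
        rw [setIntegral_const]
        simp [Real.volume_Ioo, ENNReal.toReal_ofReal h.le, max_eq_left h.le]
        ring
      simp only [hgdef]
      rw [h3] at h2
      linarith
  · -- -(deriv m t) ≤ 4 S
    intro t ht
    rw [hderiv_eq t ht, neg_neg]
    have hind_int : Integrable ((Ioc (0:ℝ) S).indicator (fun _ => (1:ℝ)))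
        (volume.restrict (Ioi 0)) := by
      rw [integrable_indicator_iff measurableSet_Ioc]
      refine integrableOn_const (LT.lt.ne ?_)
      refine lt_of_le_of_lt ?_
        (show volume (Ioc (0:ℝ) S) < ⊤ by rw [Real.volume_Ioc]; exact ENNReal.ofReal_lt_top)
      rw [Measure.restrict_apply measurableSet_Ioc]
      exact measure_mono inter_subset_left
    have h1 : ∫ r in Ioi (0:ℝ), ℓ r^2/(ℓ r + t)^2
        ≤ ∫ r in Ioi (0:ℝ), (Ioc (0:ℝ) S).indicator (fun _ => (1:ℝ)) r := by
      refine integral_mono_ae (hq2_int t ht) hind_int ?_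
      refine (ae_restrict_iff' measurableSet_Ioi).2 (Filter.Eventually.of_forall ?_)
      intro r hr
      rcases le_or_gt r S with hrS | hrS
      · rw [indicator_of_mem (mem_Ioc.mpr ⟨hr, hrS⟩)]
        exact pt2_le_one _ _ (hℓ_nonneg r) ht
      · have h0 : ℓ r = 0 := hℓ_zero r hrS.le
        rw [indicator_of_notMem (fun hmem => absurd hmem.2 (not_le.2 hrS))]
        simp [h0]
    have h2 : ∫ r in Ioi (0:ℝ), (Ioc (0:ℝ) S).indicator (fun _ => (1:ℝ)) r = S := by
      rw [setIntegral_indicator measurableSet_Ioc]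
      rw [inter_eq_right.mpr Ioc_subset_Ioi_self]
      simp [Real.volume_Ioc, hS0]
    simp only [hgdef]
    rw [h2] at h1
    linarith
  · -- B convexity
    refine ⟨convex_univ.prod (convex_Ioi 0), fun p hp q hq a b ha hb hab => ?_⟩
    have hp2 : (0:ℝ) < p.2 := hp.2
    have hq2 : (0:ℝ) < q.2 := hq.2
    simp only [Prod.smul_fst, Prod.smul_snd, Prod.fst_add, Prod.snd_add, smul_eq_mul]
    have hmem : (0:ℝ) < a*p.2 + b*q.2 := by
      have := convex_Ioi (0:ℝ) hp2 hq2 ha hb hab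
      simpa [smul_eq_mul] using this
    have step : ∫ r in Ioi (0:ℝ), ((a*p.1+b*q.1)^2 * (ℓ r^2/(ℓ r + (a*p.2+b*q.2))))
        ≤ ∫ r in Ioi (0:ℝ),
          (a * (p.1^2 * (ℓ r^2/(ℓ r + p.2))) + b * (q.1^2 * (ℓ r^2/(ℓ r + q.2)))) := by
      refine integral_mono ((hq_int _ hmem.le).const_mul _)
        ((((hq_int p.2 hp2.le).const_mul _).const_mul a).add
          (((hq_int q.2 hq2.le).const_mul _).const_mul b)) (fun r => ?_)
      exact ptB_cvx (ℓ r) p.1 q.1 p.2 q.2 a b (hℓ_nonneg r) hp2 hq2 ha hb hab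
    rw [integral_add (((hq_int p.2 hp2.le).const_mul _).const_mul a)
        (((hq_int q.2 hq2.le).const_mul _).const_mul b),
      integral_const_mul, integral_const_mul, integral_const_mul, integral_const_mul,
      integral_const_mul] at step
    simp only [hmdef]
    nlinarith [step]
  · -- -(deriv m) convex
    refine ⟨convex_Ioi 0, fun y hy z hz a b ha hb hab => ?_⟩
    have hmem : (0:ℝ) < a*y + b*z := by
      have := (convex_Ioi 0) hy hz ha hb hab
      simpa [smul_eq_mul] using this
    simp only [smul_eq_mul]
    rw [hderiv_eq _ hmem, hderiv_eq _ hy, hderiv_eq _ hz]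
    simp only [neg_neg]
    have := hg_cvx.2 hy hz ha hb hab
    simpa [smul_eq_mul] using this
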